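/- Let a torus T = (S^1)^2 act with weights: for the singularity (x^a, y^b) with 2 ≤ a ≤ b, the weight set is W = ({(i,j) : 2 ≤ i ≤ a, -b+1 ≤ j ≤ 0} \ {(a,0)}) ∪ ({(i,j) : -a+1 ≤ i ≤ 0, 2 ≤ j ≤ b} \ {(0,b)}). Then 0 is in the convex hull of W if and only if NOT (a = 2 and b ∈ {2,3,4}). -/
import Mathlib


lemma aux_centerMass {s : Set (ℝ × ℝ)} {w : Fin 3 → ℝ} {z : Fin 3 → ℝ × ℝ}
    (hw : ∀ i, 0 ≤ w i) (hsum : 0 < w 0 + w 1 + w 2) (hz : ∀ i, z i ∈ s)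
    (h0 : w 0 • z 0 + w 1 • z 1 + w 2 • z 2 = 0) :
    (0 : ℝ × ℝ) ∈ convexHull ℝ s := by
  have hm := Finset.centerMass_mem_convexHull (Finset.univ : Finset (Fin 3))
    (fun i _ => hw i) (by rw [Fin.sum_univ_three]; exact hsum) (fun i _ => hz i)
  simp only [Finset.centerMass, Fin.sum_univ_three, h0, smul_zero] at hm
  exact hm

/-- For the singularity `(x^a, y^b)` with `2 ≤ a ≤ b`, the weight set
`W = ({(i,j) : 2 ≤ i ≤ a, -b+1 ≤ j ≤ 0} \ {(a,0)}) ∪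
     ({(i,j) : -a+1 ≤ i ≤ 0, 2 ≤ j ≤ b} \ {(0,b)})`
contains `0` in its convex hull iff it is not the case that `a = 2` and `b ∈ {2,3,4}`. -/
theorem stmt_5 (a b : ℤ) (ha : 2 ≤ a) (hab : a ≤ b) :
    ((0 : ℝ × ℝ) ∈ convexHull ℝ
      {p : ℝ × ℝ | ∃ i j : ℤ, p = ((i : ℝ), (j : ℝ)) ∧
        ((2 ≤ i ∧ i ≤ a ∧ -b + 1 ≤ j ∧ j ≤ 0 ∧ (i, j) ≠ (a, 0)) ∨
         (-a + 1 ≤ i ∧ i ≤ 0 ∧ 2 ≤ j ∧ j ≤ b ∧ (i, j) ≠ (0, b)))}) ↔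
      ¬ (a = 2 ∧ (b = 2 ∨ b = 3 ∨ b = 4)) := by
  constructor
  · intro h hcond
    obtain ⟨rfl, hb⟩ := hcond
    have hb4 : b ≤ 4 := by rcases hb with rfl | rfl | rfl <;> norm_num
    have hconv : Convex ℝ {p : ℝ × ℝ | (0:ℝ) < 8 * p.1 + 5 * p.2} :=
      convex_halfSpace_gt ⟨fun x y => by simp [Prod.fst_add, Prod.snd_add]; ring,
        fun c x => by simp [Prod.smul_fst, Prod.smul_snd, smul_eq_mul]; ring⟩ 0
    have hsub : {p : ℝ × ℝ | ∃ i j : ℤ, p = ((i : ℝ), (j : ℝ)) ∧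
        ((2 ≤ i ∧ i ≤ 2 ∧ -b + 1 ≤ j ∧ j ≤ 0 ∧ (i, j) ≠ (2, 0)) ∨
         (-2 + 1 ≤ i ∧ i ≤ 0 ∧ 2 ≤ j ∧ j ≤ b ∧ (i, j) ≠ (0, b)))} ⊆
        {p : ℝ × ℝ | (0:ℝ) < 8 * p.1 + 5 * p.2} := by
      rintro p ⟨i, j, rfl, hc⟩
      have hij : (1:ℤ) ≤ 8 * i + 5 * j := by
        rcases hc with ⟨h1, h2, h3, h4, h5⟩ | ⟨h1, h2, h3, h4, h5⟩
        · have h5' : ¬ (i = 2 ∧ j = 0) := fun ⟨hi, hj⟩ => h5 (by rw [hi, hj])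
          omega
        · omega
      have hR : (1:ℝ) ≤ 8 * (i:ℝ) + 5 * (j:ℝ) := by exact_mod_cast hij
      show (0:ℝ) < 8 * ((i:ℝ), (j:ℝ)).1 + 5 * ((i:ℝ), (j:ℝ)).2
      simpa using lt_of_lt_of_le one_pos hR
    have h0 := convexHull_min hsub hconv h
    simp at h0
  · intro h
    have hb3 : 3 ≤ b := by
      by_contra hb
      exact h ⟨by omega, Or.inl (by omega)⟩
    have h4 : (4:ℤ) ≤ (a - 1) * (b - 1) := by
      rcases eq_or_lt_of_le ha with rfl | ha3
      · have hb5 : 5 ≤ b := by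
          by_contra hb5
          exact h ⟨rfl, by omega⟩
        nlinarith
      · nlinarith [mul_nonneg (by omega : (0:ℤ) ≤ a - 3) (by omega : (0:ℤ) ≤ b - 3)]
    have haR : (2:ℝ) ≤ (a:ℝ) := by exact_mod_cast ha
    have hbR : (3:ℝ) ≤ (b:ℝ) := by exact_mod_cast hb3
    have h4R : (4:ℝ) ≤ ((a:ℝ) - 1) * ((b:ℝ) - 1) := by exact_mod_cast h4
    apply aux_centerMass (w := ![2 * ((a:ℝ) - 1), 4, ((a:ℝ) - 1) * ((b:ℝ) - 1) - 4])
      (z := ![((2:ℝ), 1 - (b:ℝ)), (1 - (a:ℝ), (2:ℝ)), ((0:ℝ), (2:ℝ))])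
    · intro i
      fin_cases i <;> simp <;> nlinarith
    · simp
      nlinarith
    · intro i
      fin_cases i
      · exact ⟨2, 1 - b, by push_cast; simp, Or.inl ⟨by omega, ha, by omega, by omega,
          by simp [Prod.ext_iff]; omega⟩⟩
      · exact ⟨1 - a, 2, by push_cast; simp, Or.inr ⟨by omega, by omega, by omega, by omega,
          by simp [Prod.ext_iff]; omega⟩⟩
      · exact ⟨0, 2, by push_cast; simp, Or.inr ⟨by omega, by omega, by omega, by omega,
          by simp [Prod.ext_iff]; omega⟩⟩
    · simp [Prod.ext_iff, Prod.smul_mk, smul_eq_mul]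
      constructor <;> ring
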